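/- For every truth assignment α to x_1, …, x_{n+2} that satisfies Ψ, the set S_α = {Ψ} ∪ {x_i : α(x_i) = ⊤, 1 ≤ i ≤ n+2} ∪ {x̄_i : α(x_i) = ⊥, 1 ≤ i ≤ n+2} is a preferred extension of the argument system H_Ψ. -/

import Mathlib

/-- `att y x` means "y attacks x". `S` is conflict-free if no argument in `S`
attacks an argument in `S`. -/
def conflictFree {V : Type*} (att : V → V → Prop) (S : Set V) : Prop :=
  ∀ x ∈ S, ∀ y ∈ S, ¬ att y x

/-- `x` is acceptable w.r.t. `S` if every attacker of `x` is attacked by some member of `S`. -/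
def acceptable {V : Type*} (att : V → V → Prop) (S : Set V) (x : V) : Prop :=
  ∀ y, att y x → ∃ z ∈ S, att z y

/-- `S` is admissible if it is conflict-free and each member is acceptable w.r.t. `S`. -/
def admissible {V : Type*} (att : V → V → Prop) (S : Set V) : Prop :=
  conflictFree att S ∧ ∀ x ∈ S, acceptable att S x

/-- A preferred extension is a ⊆-maximal admissible set. -/
def preferredExt {V : Type*} (att : V → V → Prop) (S : Set V) : Prop :=
  admissible att S ∧ ∀ T, admissible att T → S ⊆ T → S = T

/-- A stable extension is a conflict-free set attacking every outside argument. -/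
def stableExt {V : Type*} (att : V → V → Prop) (S : Set V) : Prop :=
  conflictFree att S ∧ ∀ y, y ∉ S → ∃ z ∈ S, att z y

/-- A 3-CNF over variables `Fin n` is given by `C : Fin m → Fin 3 → Fin n × Bool`,
where literal `(k, true)` is `x_k` and `(k, false)` is `¬x_k`.
`PhiSat C α` says the assignment `α` satisfies `Φ = ∧_i C_i`. -/
def PhiSat {n m : ℕ} (C : Fin m → Fin 3 → Fin n × Bool) (α : Fin n → Bool) : Prop :=
  ∀ i : Fin m, ∃ j : Fin 3, α (C i j).1 = (C i j).2

/-- The new variable `x_{n+1}` as an element of `Fin (n+2)`. -/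
def vn1 (n : ℕ) : Fin (n + 2) := ⟨n, by omega⟩

/-- The new variable `x_{n+2}` as an element of `Fin (n+2)`. -/
def vn2 (n : ℕ) : Fin (n + 2) := ⟨n + 1, by omega⟩

/-- `PsiSat C α` says `α : Fin (n+2) → Bool` satisfies
`Ψ = ∧_i (C_i ∨ ¬x_{n+1} ∨ x_{n+2}) ∧ (C_i ∨ x_{n+1} ∨ ¬x_{n+2})`. -/
def PsiSat {n m : ℕ} (C : Fin m → Fin 3 → Fin n × Bool) (α : Fin (n + 2) → Bool) : Prop :=
  ∀ i : Fin m,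
    ((∃ j : Fin 3, α (Fin.castAdd 2 (C i j).1) = (C i j).2) ∨
       α (vn1 n) = false ∨ α (vn2 n) = true) ∧
    ((∃ j : Fin 3, α (Fin.castAdd 2 (C i j).1) = (C i j).2) ∨
       α (vn1 n) = true ∨ α (vn2 n) = false)

/-- The arguments of the system `H_Ψ`: the argument `Ψ`, the argument `χ`,
literal arguments `x_i` (`pos i`) and `x̄_i` (`neg i`) for `1 ≤ i ≤ n+2`, and
clause arguments `C_j^(1)` (`c1 j`) and `C_j^(2)` (`c2 j`) for `1 ≤ j ≤ m`. -/
inductive Arg (n m : ℕ) : Type where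
  | psi : Arg n m
  | chi : Arg n m
  | pos : Fin (n + 2) → Arg n m
  | neg : Fin (n + 2) → Arg n m
  | c1 : Fin m → Arg n m
  | c2 : Fin m → Arg n m

/-- The literal argument corresponding to a literal: `x_k` for `(k, true)`,
`x̄_k` for `(k, false)`. -/
def litArg {n m : ℕ} (l : Fin n × Bool) : Arg n m :=
  if l.2 then Arg.pos (Fin.castAdd 2 l.1) else Arg.neg (Fin.castAdd 2 l.1)

/-- The attack relation of `H_Ψ`: `attPsi C a b` means `a` attacks `b`. -/
inductive attPsi {n m : ℕ} (C : Fin m → Fin 3 → Fin n × Bool) : Arg n m → Arg n m → Prop where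
  | posNeg (i : Fin (n + 2)) : attPsi C (.pos i) (.neg i)
  | negPos (i : Fin (n + 2)) : attPsi C (.neg i) (.pos i)
  | chiPos (i : Fin n) : attPsi C .chi (.pos (Fin.castAdd 2 i))
  | chiNeg (i : Fin n) : attPsi C .chi (.neg (Fin.castAdd 2 i))
  | litC1 (i : Fin m) (j : Fin 3) : attPsi C (litArg (C i j)) (.c1 i)
  | litC2 (i : Fin m) (j : Fin 3) : attPsi C (litArg (C i j)) (.c2 i)
  | c1Psi (i : Fin m) : attPsi C (.c1 i) .psi
  | c2Psi (i : Fin m) : attPsi C (.c2 i) .psi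
  | negN1C1 (i : Fin m) : attPsi C (.neg (vn1 n)) (.c1 i)
  | posN2C1 (i : Fin m) : attPsi C (.pos (vn2 n)) (.c1 i)
  | posN1C2 (i : Fin m) : attPsi C (.pos (vn1 n)) (.c2 i)
  | negN2C2 (i : Fin m) : attPsi C (.neg (vn2 n)) (.c2 i)
  | psiChi : attPsi C .psi .chi

/-- The set `S_α = {Ψ} ∪ {x_i : α(x_i) = ⊤} ∪ {x̄_i : α(x_i) = ⊥}`. -/
def Salpha {n m : ℕ} (α : Fin (n + 2) → Bool) : Set (Arg n m) :=
  fun a =>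
    match a with
    | .psi => True
    | .pos i => α i = true
    | .neg i => α i = false
    | _ => False


lemma lit_mem_Salpha {n m : ℕ} (α : Fin (n + 2) → Bool) (l : Fin n × Bool)
    (h : α (Fin.castAdd 2 l.1) = l.2) : litArg (m := m) l ∈ Salpha α := by
  unfold litArg
  cases hb : l.2 <;> rw [hb] at h <;> simp [Salpha, Membership.mem, Set.Mem, h]

lemma c1_attacked {n m : ℕ} {C : Fin m → Fin 3 → Fin n × Bool} {α : Fin (n + 2) → Bool}
    (hα : PsiSat C α) (i : Fin m) :
    ∃ z ∈ Salpha (n := n) (m := m) α, attPsi C z (.c1 i) := by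
  rcases (hα i).1 with ⟨j, hj⟩ | h | h
  · exact ⟨litArg (C i j), lit_mem_Salpha α _ hj, attPsi.litC1 i j⟩
  · exact ⟨.neg (vn1 n), h, attPsi.negN1C1 i⟩
  · exact ⟨.pos (vn2 n), h, attPsi.posN2C1 i⟩

lemma c2_attacked {n m : ℕ} {C : Fin m → Fin 3 → Fin n × Bool} {α : Fin (n + 2) → Bool}
    (hα : PsiSat C α) (i : Fin m) :
    ∃ z ∈ Salpha (n := n) (m := m) α, attPsi C z (.c2 i) := by
  rcases (hα i).2 with ⟨j, hj⟩ | h | h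
  · exact ⟨litArg (C i j), lit_mem_Salpha α _ hj, attPsi.litC2 i j⟩
  · exact ⟨.pos (vn1 n), h, attPsi.posN1C2 i⟩
  · exact ⟨.neg (vn2 n), h, attPsi.negN2C2 i⟩

lemma Salpha_admissible {n m : ℕ} {C : Fin m → Fin 3 → Fin n × Bool} {α : Fin (n + 2) → Bool}
    (hα : PsiSat C α) : admissible (attPsi C) (Salpha (n := n) (m := m) α) := by
  constructor
  · intro x hx y hy hatt
    cases hatt <;> simp_all [Salpha, Membership.mem, Set.Mem]
  · intro x hx y hy
    cases hy with
    | posNeg i => exact ⟨.neg i, hx, attPsi.negPos i⟩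
    | negPos i => exact ⟨.pos i, hx, attPsi.posNeg i⟩
    | chiPos i => exact ⟨.psi, trivial, attPsi.psiChi⟩
    | chiNeg i => exact ⟨.psi, trivial, attPsi.psiChi⟩
    | litC1 i j => simp_all [Salpha, Membership.mem, Set.Mem]
    | litC2 i j => simp_all [Salpha, Membership.mem, Set.Mem]
    | c1Psi i => exact c1_attacked hα i
    | c2Psi i => exact c2_attacked hα i
    | negN1C1 i => simp_all [Salpha, Membership.mem, Set.Mem]
    | posN2C1 i => simp_all [Salpha, Membership.mem, Set.Mem]
    | posN1C2 i => simp_all [Salpha, Membership.mem, Set.Mem]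
    | negN2C2 i => simp_all [Salpha, Membership.mem, Set.Mem]
    | psiChi => simp_all [Salpha, Membership.mem, Set.Mem]

/-- Every satisfying assignment `α` of `Ψ` induces a preferred extension `S_α` of `H_Ψ`. -/
theorem stmt_9 (n m : ℕ) (hn : 1 ≤ n) (hm : 1 ≤ m)
    (C : Fin m → Fin 3 → Fin n × Bool) (α : Fin (n + 2) → Bool)
    (hα : PsiSat C α) :
    preferredExt (attPsi C) (Salpha (n := n) (m := m) α) := by
  refine ⟨Salpha_admissible hα, fun T hT hST => ?_⟩
  apply Set.Subset.antisymm hST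
  intro a ha
  have hpsiT : (Arg.psi : Arg n m) ∈ T := hST trivial
  cases a with
  | psi => trivial
  | chi => exact absurd attPsi.psiChi (hT.1 .chi ha .psi hpsiT)
  | pos i =>
    cases hb : α i with
    | true => exact hb
    | false =>
      have hneg : (Arg.neg i : Arg n m) ∈ T := hST hb
      exact absurd (attPsi.negPos i) (hT.1 (.pos i) ha (.neg i) hneg)
  | neg i =>
    cases hb : α i with
    | false => exact hb
    | true =>
      have hpos : (Arg.pos i : Arg n m) ∈ T := hST hb
      exact absurd (attPsi.posNeg i) (hT.1 (.neg i) ha (.pos i) hpos)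
  | c1 i => exact absurd (attPsi.c1Psi i) (hT.1 .psi hpsiT (.c1 i) ha)
  | c2 i => exact absurd (attPsi.c2Psi i) (hT.1 .psi hpsiT (.c2 i) ha)
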